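/- arXiv:math/0606390 — 2 statements merged into one kernel-verified Lean document; each statement's English description precedes it below -/
import Mathlib

section
/- Define f : ℝ² → ℝ by f(x₁, x₂) = x₁·sin(x₂/x₁) for x₁ ≠ 0 and f(0, x₂) = 0, and define its fiberwise holomorphic extension F : ℝ × ℂ → ℂ by F(x₁, z₂) = x₁·sin(z₂/x₁) for x₁ ≠ 0 and F(0, z₂) = 0. Then: (i) f is continuous on ℝ²; (ii) for every x₁ ∈ ℝ the map z₂ ↦ F(x₁, z₂) is entire and agrees with f(x₁, ·) on ℝ; (iii) F is not tempered near any point (0, x₂): for every x₂ ∈ ℝ, every C > 0 and every k ∈ ℕ there exists a positive integer ν such that |F(1/ν², x₂ + i/ν)| > C·ν^k (indeed |F(1/ν², x₂ + i/ν)| ≥ ν^{-2}·sinh(ν) → ∞ faster than any power of ν). -/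
open Complex Set

/-- The function `f(x₁,x₂) = x₁ sin(x₂/x₁)` (and `0` for `x₁ = 0`). -/
noncomputable def exF : ℝ × ℝ → ℝ :=
  fun p => if p.1 = 0 then 0 else p.1 * Real.sin (p.2 / p.1)

/-- Its fiberwise holomorphic extension `F(x₁,z₂) = x₁ sin(z₂/x₁)`. -/
noncomputable def exFext : ℝ → ℂ → ℂ :=
  fun x₁ z₂ => if x₁ = 0 then 0 else (x₁ : ℂ) * Complex.sin (z₂ / (x₁ : ℂ))

lemma sinh_le_norm_sin (a b : ℝ) : Real.sinh b ≤ ‖Complex.sin ((a : ℂ) + (b : ℝ) * Complex.I)‖ := by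
  have h : Complex.sin ((a : ℂ) + (b : ℝ) * Complex.I)
      = (Complex.exp (-((a:ℂ) + (b:ℝ)*Complex.I) * Complex.I)
        - Complex.exp (((a:ℂ) + (b:ℝ)*Complex.I) * Complex.I)) * Complex.I / 2 := rfl
  rw [h]
  have h1 : ‖Complex.exp (-((a:ℂ) + (b:ℝ)*Complex.I) * Complex.I)‖ = Real.exp b := by
    rw [Complex.norm_exp]
    congr 1
    simp [Complex.mul_re]
  have h2 : ‖Complex.exp (((a:ℂ) + (b:ℝ)*Complex.I) * Complex.I)‖ = Real.exp (-b) := by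
    rw [Complex.norm_exp]
    congr 1
    simp [Complex.mul_re]
  have key := norm_sub_norm_le (Complex.exp (-((a:ℂ) + (b:ℝ)*Complex.I) * Complex.I))
    (Complex.exp (((a:ℂ) + (b:ℝ)*Complex.I) * Complex.I))
  rw [h1, h2] at key
  rw [norm_div, norm_mul, Complex.norm_I, mul_one]
  have : ‖(2:ℂ)‖ = 2 := by norm_num
  rw [this, Real.sinh_eq]
  linarith

lemma norm_exFext_eq (x₂ : ℝ) (ν : ℕ) (hν : 0 < ν) :
    ((ν : ℝ) ^ 2)⁻¹ * Real.sinh (ν : ℝ) ≤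
      ‖exFext (1 / (ν : ℝ) ^ 2) ((x₂ : ℂ) + Complex.I / (ν : ℝ))‖ := by
  have hν' : (ν : ℝ) ≠ 0 := Nat.cast_ne_zero.2 hν.ne'
  have hνc : (ν : ℂ) ≠ 0 := Nat.cast_ne_zero.2 hν.ne'
  have ha : (1 / (ν : ℝ) ^ 2) ≠ 0 := by positivity
  rw [exFext, if_neg ha]
  have harg : ((x₂ : ℂ) + Complex.I / (ν : ℝ)) / ((1 / (ν : ℝ) ^ 2 : ℝ) : ℂ)
      = (((ν:ℝ)^2 * x₂ : ℝ) : ℂ) + ((ν : ℝ) : ℂ) * Complex.I := by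
    push_cast
    field_simp
  rw [harg, norm_mul]
  have h1 : ‖((1 / (ν : ℝ) ^ 2 : ℝ) : ℂ)‖ = ((ν:ℝ)^2)⁻¹ := by
    rw [Complex.norm_real, Real.norm_eq_abs, abs_of_pos (by positivity)]
    rw [one_div]
  rw [h1]
  have := sinh_le_norm_sin ((ν:ℝ)^2 * x₂) (ν : ℝ)
  have hpos : (0:ℝ) < ((ν:ℝ)^2)⁻¹ := by positivity
  exact mul_le_mul_of_nonneg_left this hpos.le

/-- Example 2.3: `f` is continuous, each slice extends to an
entire function, but the extension is not tempered near any point `(0, x₂)`. -/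
theorem stmt7 :
    -- (i) f is continuous on ℝ²
    Continuous exF ∧
    -- (ii) each slice extension is entire and agrees with f on ℝ
    (∀ x₁ : ℝ, Differentiable ℂ (exFext x₁) ∧
      ∀ t : ℝ, exFext x₁ (↑t) = (exF (x₁, t) : ℂ)) ∧
    -- (iii) the extension is not tempered near any (0, x₂)
    (∀ x₂ : ℝ, ∀ C : ℝ, 0 < C → ∀ k : ℕ, ∃ ν : ℕ, 0 < ν ∧
      C * (ν : ℝ) ^ k <
        ‖exFext (1 / (ν : ℝ) ^ 2) ((x₂ : ℂ) + Complex.I / (ν : ℝ))‖) ∧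
    -- indeed |F(1/ν², x₂ + i/ν)| ≥ ν⁻² sinh ν
    (∀ x₂ : ℝ, ∀ ν : ℕ, 0 < ν →
      ((ν : ℝ) ^ 2)⁻¹ * Real.sinh (ν : ℝ) ≤
        ‖exFext (1 / (ν : ℝ) ^ 2) ((x₂ : ℂ) + Complex.I / (ν : ℝ))‖) := by
  refine ⟨?_, ?_, ?_, fun x₂ ν hν => norm_exFext_eq x₂ ν hν⟩
  · -- continuity
    rw [continuous_iff_continuousAt]
    intro p
    by_cases hp : p.1 = 0
    · have h0 : exF p = 0 := by rw [exF, if_pos hp]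
      rw [ContinuousAt, h0]
      have hb : ∀ q : ℝ × ℝ, ‖exF q‖ ≤ |q.1| := by
        intro q
        rw [exF]
        split_ifs with h
        · simp
        · rw [Real.norm_eq_abs, abs_mul]
          calc |q.1| * |Real.sin (q.2 / q.1)| ≤ |q.1| * 1 :=
                mul_le_mul_of_nonneg_left (Real.abs_sin_le_one _) (abs_nonneg _)
            _ = |q.1| := mul_one _
      have hg : Filter.Tendsto (fun q : ℝ × ℝ => |q.1|) (nhds p) (nhds 0) := by
        have : Continuous (fun q : ℝ × ℝ => |q.1|) := continuous_fst.abs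
        simpa [ContinuousAt, hp] using this.continuousAt (x := p)
      exact squeeze_zero_norm hb hg
    · have hopen : IsOpen {q : ℝ × ℝ | q.1 ≠ 0} :=
        isOpen_ne.preimage continuous_fst
      have hev : exF =ᶠ[nhds p] fun q => q.1 * Real.sin (q.2 / q.1) := by
        filter_upwards [hopen.mem_nhds hp] with q hq
        rw [exF, if_neg hq]
      refine ContinuousAt.congr ?_ hev.symm
      exact (continuous_fst.continuousAt).mul
        ((Real.continuous_sin.continuousAt).comp
          ((continuous_snd.continuousAt).div continuous_fst.continuousAt hp))
  · -- differentiability and agreement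
    intro x₁
    constructor
    · by_cases h : x₁ = 0
      · have : exFext x₁ = fun _ => 0 := by funext z; rw [exFext, if_pos h]
        rw [this]; exact differentiable_const 0
      · have : exFext x₁ = fun z => (x₁ : ℂ) * Complex.sin (z / (x₁ : ℂ)) := by
          funext z; rw [exFext, if_neg h]
        rw [this]
        exact (differentiable_const _).mul
          (Complex.differentiable_sin.comp (differentiable_id.div_const _))
    · intro t
      by_cases h : x₁ = 0
      · rw [exFext, if_pos h, exF, if_pos h]; simp
      · rw [exFext, if_neg h, exF]
        simp only [if_neg h]
        push_cast
        ring
  · -- unboundedness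
    intro x₂ C hC k
    have h1 : Filter.Tendsto (fun x : ℝ => Real.exp x / x ^ (k + 2)) Filter.atTop Filter.atTop :=
      Real.tendsto_exp_div_pow_atTop (k + 2)
    have h2 : ∀ᶠ x : ℝ in Filter.atTop, Real.exp x / x ^ (k + 2) > 2 * C + 2 :=
      h1.eventually_gt_atTop _
    have h3 : ∀ᶠ ν : ℕ in Filter.atTop,
        Real.exp (ν:ℝ) / (ν:ℝ) ^ (k + 2) > 2 * C + 2 :=
      (tendsto_natCast_atTop_atTop (R := ℝ)).eventually h2
    obtain ⟨ν, hν1, hν2⟩ := (h3.and (Filter.eventually_ge_atTop 1)).exists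
    refine ⟨ν, hν2, ?_⟩
    have hνpos : (0:ℝ) < (ν:ℝ) := by exact_mod_cast hν2
    have hν1' : (1:ℝ) ≤ (ν:ℝ) := by exact_mod_cast hν2
    have hppos : (0:ℝ) < (ν:ℝ) ^ (k+2) := by positivity
    have hpow : (1:ℝ) ≤ (ν:ℝ) ^ (k+2) := one_le_pow₀ hν1'
    have hexp : (2 * C + 2) * (ν:ℝ) ^ (k+2) < Real.exp (ν:ℝ) :=
      (lt_div_iff₀ hppos).1 hν1
    have he : Real.exp (-(ν:ℝ)) ≤ 1 := Real.exp_le_one_iff.2 (by linarith)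
    have hsinh : C * (ν:ℝ) ^ (k+2) < Real.sinh (ν:ℝ) := by
      rw [Real.sinh_eq]
      nlinarith
    have h2pos : (0:ℝ) < (ν:ℝ) ^ 2 := by positivity
    calc C * (ν:ℝ) ^ k = ((ν:ℝ)^2)⁻¹ * (C * (ν:ℝ) ^ (k+2)) := by
          field_simp; ring
      _ < ((ν:ℝ)^2)⁻¹ * Real.sinh (ν:ℝ) := by
          exact mul_lt_mul_of_pos_left hsinh (by positivity)
      _ ≤ _ := norm_exFext_eq x₂ ν hν2
end

section
/- Let I = (−1,1), let Δ = {z ∈ ℂ : |z| < 1} be the open unit disc, and let f : I × ℂ → ℂ be such that: for every x₁ ∈ I the function g_{x₁} := f(x₁, ·) is holomorphic on Δ and continuous on I (as a function of a real variable agreeing with the restriction), and the restriction of f to I × I is continuous. For l > 0 set K_l = {x₁ ∈ I : sup_{z₂ ∈ Δ} |f(x₁, z₂)| ≤ l}. Then K_l is closed in I, and the function (x₁, z₂) ↦ f(x₁, z₂) is (jointly) continuous on K_l × Δ. -/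
open Complex Set Metric Filter Finset Topology
noncomputable def cfS (g : ℂ → ℂ) : FormalMultilinearSeries ℂ ℂ ℂ :=
  cauchyPowerSeries g 0 ((2⁻¹ : NNReal) : ℝ)

noncomputable def cf (g : ℂ → ℂ) (k : ℕ) : ℂ := (cfS g).coeff k

lemma cfS_eq {g : ℂ → ℂ} (hg : DifferentiableOn ℂ g (ball 0 1)) {ρ : NNReal}
    (h0 : 0 < ρ) (h1 : (ρ : ℝ) < 1) :
    cfS g = cauchyPowerSeries g 0 ((ρ : NNReal) : ℝ) := by
  have H : HasFPowerSeriesOnBall g (cauchyPowerSeries g 0 ((ρ : NNReal) : ℝ)) 0 ρ :=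
    (hg.mono (closedBall_subset_ball h1)).hasFPowerSeriesOnBall h0
  have H2 : HasFPowerSeriesOnBall g (cfS g) 0 (2⁻¹ : NNReal) :=
    (hg.mono (closedBall_subset_ball (by norm_num))).hasFPowerSeriesOnBall (by norm_num)
  exact H2.hasFPowerSeriesAt.eq_formalMultilinearSeries H.hasFPowerSeriesAt

lemma hasFPS {g : ℂ → ℂ} (hg : DifferentiableOn ℂ g (ball 0 1)) {ρ : NNReal}
    (h0 : 0 < ρ) (h1 : (ρ : ℝ) < 1) :
    HasFPowerSeriesOnBall g (cfS g) 0 ρ := by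
  rw [cfS_eq hg h0 h1]
  exact (hg.mono (closedBall_subset_ball h1)).hasFPowerSeriesOnBall h0

lemma hasSum_cf {g : ℂ → ℂ} (hg : DifferentiableOn ℂ g (ball 0 1)) {z : ℂ} (hz : ‖z‖ < 1) :
    HasSum (fun n => cf g n * z ^ n) (g z) := by
  set ρ : NNReal := ⟨(1 + ‖z‖) / 2, by positivity⟩ with hρ
  have h0 : 0 < ρ := by
    rw [← NNReal.coe_lt_coe]
    show (0 : ℝ) < (1 + ‖z‖) / 2
    positivity
  have h1 : (ρ : ℝ) < 1 := by
    show (1 + ‖z‖) / 2 < 1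
    linarith
  have hzρ : ‖z‖ < (ρ : ℝ) := by
    show ‖z‖ < (1 + ‖z‖) / 2
    linarith
  have H := hasFPS hg h0 h1
  have hz' : z ∈ Metric.eball (0 : ℂ) ρ := by
    rw [EMetric.mem_ball, edist_zero_right, ← ofReal_norm,
      ← ENNReal.ofReal_coe_nnreal]
    exact ENNReal.ofReal_lt_ofReal_iff_of_nonneg (norm_nonneg z) |>.mpr hzρ
  have := H.hasSum hz'
  simp only [zero_add] at this
  have heq : ∀ n, (cfS g n fun _ => z) = cf g n * z ^ n := by
    intro n
    rw [FormalMultilinearSeries.apply_eq_pow_smul_coeff, smul_eq_mul, mul_comm]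
    rfl
  simpa only [heq] using this

lemma cf_norm_le {g : ℂ → ℂ} (hg : DifferentiableOn ℂ g (ball 0 1)) {ρ M : ℝ}
    (h0 : 0 < ρ) (h1 : ρ < 1)
    (hM : ∀ w ∈ sphere (0 : ℂ) ρ, ‖g w‖ ≤ M) (k : ℕ) : ‖cf g k‖ ≤ M / ρ ^ k := by
  lift ρ to NNReal using h0.le with ρ'
  have h0' : 0 < ρ' := by exact_mod_cast h0
  have hsub : sphere (0 : ℂ) (ρ' : ℝ) ⊆ ball (0 : ℂ) 1 := by
    intro w hw
    rw [mem_sphere_zero_iff_norm] at hw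
    rw [mem_ball_zero_iff, hw]; exact h1
  have hgc : Continuous fun θ : ℝ => ‖g (circleMap 0 (ρ' : ℝ) θ)‖ := by
    refine (hg.continuousOn.comp_continuous (continuous_circleMap 0 _) fun θ => ?_).norm
    exact hsub (circleMap_mem_sphere _ (by exact_mod_cast h0.le) θ)
  have key : ‖cf g k‖ ≤ ((2 * Real.pi)⁻¹ * ∫ θ : ℝ in (0)..2 * Real.pi,
      ‖g (circleMap 0 (ρ' : ℝ) θ)‖) * |(ρ' : ℝ)|⁻¹ ^ k := by
    have : cf g k = (cauchyPowerSeries g 0 ((ρ' : NNReal) : ℝ)).coeff k := by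
      rw [cf, cfS_eq hg h0' h1]
    rw [this, ← FormalMultilinearSeries.norm_apply_eq_norm_coef]
    exact norm_cauchyPowerSeries_le g 0 _ k
  have hint : (∫ θ : ℝ in (0)..2 * Real.pi, ‖g (circleMap 0 (ρ' : ℝ) θ)‖)
      ≤ ∫ _ : ℝ in (0)..2 * Real.pi, M := by
    apply intervalIntegral.integral_mono_on Real.two_pi_pos.le
      (hgc.intervalIntegrable _ _) (intervalIntegrable_const)
    intro θ _
    exact hM _ (circleMap_mem_sphere _ (by exact_mod_cast h0.le) θ)
  have hM0 : 0 ≤ M :=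
    le_trans (norm_nonneg _) (hM _ (circleMap_mem_sphere _ (by exact_mod_cast h0.le) 0))
  calc ‖cf g k‖ ≤ ((2 * Real.pi)⁻¹ * ∫ θ : ℝ in (0)..2 * Real.pi,
      ‖g (circleMap 0 (ρ' : ℝ) θ)‖) * |(ρ' : ℝ)|⁻¹ ^ k := key
    _ ≤ ((2 * Real.pi)⁻¹ * (2 * Real.pi * M)) * |(ρ' : ℝ)|⁻¹ ^ k := by
        have hint' : (∫ θ : ℝ in (0)..2 * Real.pi, ‖g (circleMap 0 (ρ' : ℝ) θ)‖)
            ≤ 2 * Real.pi * M := by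
          simpa [intervalIntegral.integral_const, smul_eq_mul] using hint
        exact mul_le_mul_of_nonneg_right
          (mul_le_mul_of_nonneg_left hint' (by positivity)) (by positivity)
    _ = M / (ρ' : ℝ) ^ k := by
        rw [inv_mul_cancel_left₀ (by positivity : (2 * Real.pi) ≠ 0),
          _root_.abs_of_nonneg (by exact_mod_cast h0.le : (0:ℝ) ≤ (ρ' : ℝ)),
          inv_pow, div_eq_mul_inv]

lemma norm_hasSum_le_geom {u : ℕ → ℂ} {a : ℂ} {C q : ℝ} (hu : HasSum u a)
    (hq0 : 0 ≤ q) (hq1 : q < 1) (h : ∀ n, ‖u n‖ ≤ C * q ^ n) : ‖a‖ ≤ C / (1 - q) := by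
  have hsummaj : Summable (fun n => C * q ^ n) :=
    (summable_geometric_of_lt_one hq0 hq1).mul_left C
  have h1 : Summable fun n => ‖u n‖ :=
    Summable.of_nonneg_of_le (fun n => norm_nonneg _) h hsummaj
  calc ‖a‖ = ‖∑' n, u n‖ := by rw [hu.tsum_eq]
    _ ≤ ∑' n, ‖u n‖ := norm_tsum_le_tsum_norm h1
    _ ≤ ∑' n, C * q ^ n := Summable.tsum_le_tsum h h1 hsummaj
    _ = C * (1 - q)⁻¹ := by rw [tsum_mul_left, tsum_geometric_of_lt_one hq0 hq1]
    _ = C / (1 - q) := (div_eq_mul_inv _ _).symm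

lemma tail_bound {g : ℂ → ℂ} (hg : DifferentiableOn ℂ g (ball 0 1)) {ρ M r : ℝ}
    (h0 : 0 < ρ) (h1 : ρ < 1) (hr0 : 0 ≤ r) (hrρ : r < ρ)
    (hM : ∀ w ∈ sphere (0 : ℂ) ρ, ‖g w‖ ≤ M) {z : ℂ} (hz : ‖z‖ ≤ r) (N : ℕ) :
    ‖g z - ∑ j ∈ Finset.range N, cf g j * z ^ j‖ ≤ M * (r / ρ) ^ N / (1 - r / ρ) := by
  have hM0 : 0 ≤ M := by
    have : (ρ : ℂ) ∈ sphere (0 : ℂ) ρ := by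
      rw [mem_sphere_zero_iff_norm]
      simpa using h0.le
    exact le_trans (norm_nonneg _) (hM _ this)
  have hz1 : ‖z‖ < 1 := lt_of_le_of_lt hz (hrρ.trans h1)
  have hs := hasSum_cf hg hz1
  have hshift : HasSum (fun n => cf g (n + N) * z ^ (n + N))
      (g z - ∑ j ∈ Finset.range N, cf g j * z ^ j) :=
    (hasSum_nat_add_iff' N).mpr hs
  set q : ℝ := r / ρ with hq
  have hq0 : 0 ≤ q := div_nonneg hr0 h0.le
  have hq1 : q < 1 := (div_lt_one h0).mpr hrρ
  have hterm : ∀ n, ‖cf g (n + N) * z ^ (n + N)‖ ≤ (M * q ^ N) * q ^ n := by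
    intro n
    rw [norm_mul, norm_pow]
    calc ‖cf g (n + N)‖ * ‖z‖ ^ (n + N)
        ≤ (M / ρ ^ (n + N)) * r ^ (n + N) :=
          mul_le_mul (cf_norm_le hg h0 h1 hM _) (pow_le_pow_left₀ (norm_nonneg z) hz _)
            (by positivity) (div_nonneg hM0 (by positivity))
      _ = M * q ^ (n + N) := by
          rw [hq, div_pow, div_mul_eq_mul_div, mul_div_assoc]
      _ = (M * q ^ N) * q ^ n := by rw [pow_add]; ring
  calc ‖g z - ∑ j ∈ Finset.range N, cf g j * z ^ j‖
      ≤ (M * q ^ N) / (1 - q) := norm_hasSum_le_geom hshift hq0 hq1 hterm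
    _ = M * q ^ N / (1 - q) := rfl

/-- the sets `K_l` are closed in `I` and `f` is jointly
continuous on `K_l × Δ` (displayed claim (2.1) in step (a)). -/
theorem stmt8 (f : ℝ → ℂ → ℂ)
    (hhol : ∀ x₁ ∈ Ioo (-1 : ℝ) 1, DifferentiableOn ℂ (f x₁) (ball (0 : ℂ) 1))
    (hcont : ContinuousOn (fun p : ℝ × ℝ => f p.1 (↑p.2))
      (Ioo (-1 : ℝ) 1 ×ˢ Ioo (-1 : ℝ) 1))
    (l : ℝ) (hl : 0 < l) :
    (closure {x₁ ∈ Ioo (-1 : ℝ) 1 | ∀ z₂ ∈ ball (0 : ℂ) 1, ‖f x₁ z₂‖ ≤ l} ∩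
        Ioo (-1 : ℝ) 1 ⊆
      {x₁ ∈ Ioo (-1 : ℝ) 1 | ∀ z₂ ∈ ball (0 : ℂ) 1, ‖f x₁ z₂‖ ≤ l}) ∧
    ContinuousOn (fun p : ℝ × ℂ => f p.1 p.2)
      ({x₁ ∈ Ioo (-1 : ℝ) 1 | ∀ z₂ ∈ ball (0 : ℂ) 1, ‖f x₁ z₂‖ ≤ l} ×ˢ
        ball (0 : ℂ) 1) := by
  set S := {x₁ ∈ Ioo (-1 : ℝ) 1 | ∀ z₂ ∈ ball (0 : ℂ) 1, ‖f x₁ z₂‖ ≤ l} with hSdef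
  have hSb : ∀ y ∈ S, ∀ {ρ : ℝ}, 0 < ρ → ρ < 1 → ∀ w ∈ sphere (0 : ℂ) ρ, ‖f y w‖ ≤ l := by
    intro y hy ρ h0 h1 w hw
    exact hy.2 w (by rw [mem_ball_zero_iff, mem_sphere_zero_iff_norm.mp hw]; exact h1)
  set c : ℝ → ℕ → ℂ := fun y k => cf (f y) k with hc
  -- coefficient continuity
  have hC : ∀ k : ℕ, ∀ x ∈ closure S ∩ Ioo (-1 : ℝ) 1,
      Tendsto (fun y => c y k) (𝓝[S] x) (𝓝 (c x k)) := by
    intro k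
    induction k using Nat.strong_induction_on with
    | _ k IH =>
      rintro x ⟨hxc, hxI⟩
      have hgx : DifferentiableOn ℂ (f x) (ball 0 1) := hhol x hxI
      obtain ⟨M, hM0, hMb⟩ : ∃ M, 0 ≤ M ∧ ∀ w ∈ sphere (0 : ℂ) (2⁻¹ : ℝ), ‖f x w‖ ≤ M := by
        have hsub : sphere (0 : ℂ) (2⁻¹ : ℝ) ⊆ ball (0 : ℂ) 1 := fun w hw => by
          rw [mem_ball_zero_iff, mem_sphere_zero_iff_norm.mp hw]; norm_num
        obtain ⟨w₀, _, hw⟩ := (isCompact_sphere (0 : ℂ) (2⁻¹ : ℝ)).exists_isMaxOn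
          ⟨(2⁻¹ : ℂ), by simp [mem_sphere_zero_iff_norm]⟩
          ((hgx.continuousOn.mono hsub).norm)
        exact ⟨‖f x w₀‖, norm_nonneg _, fun w hww => hw hww⟩
      rw [Metric.tendsto_nhds]
      intro ε hε
      set D : ℝ := (l + M + 1) * 2 ^ (k + 2) with hD
      have hD0 : 0 < D := by positivity
      set t : ℝ := min 8⁻¹ (ε / (4 * D)) with ht
      have ht0 : 0 < t := lt_min (by norm_num) (by positivity)
      have ht8 : t ≤ 8⁻¹ := min_le_left _ _
      have htD : D * t ≤ ε / 4 := by
        calc D * t ≤ D * (ε / (4 * D)) :=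
              mul_le_mul_of_nonneg_left (min_le_right _ _) hD0.le
          _ = ε / 4 := by field_simp
      have htI : t ∈ Ioo (-1 : ℝ) 1 := ⟨by linarith, by linarith⟩
      have ht2 : t < 2⁻¹ := by linarith
      have htc0 : ((t : ℂ)) ≠ 0 := by exact_mod_cast ht0.ne'
      -- tail estimate
      have key : ∀ (y : ℝ) (B : ℝ), 0 ≤ B → B ≤ l + M → DifferentiableOn ℂ (f y) (ball 0 1) →
          (∀ w ∈ sphere (0 : ℂ) (2⁻¹ : ℝ), ‖f y w‖ ≤ B) →
          ‖(f y ↑t - ∑ j ∈ Finset.range k, c y j * (↑t) ^ j) / (↑t) ^ k - c y k‖ ≤ ε / 4 := by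
        intro y B hB0 hBlM hdy hBy
        have htail := tail_bound hdy (by norm_num : (0:ℝ) < 2⁻¹) (by norm_num)
          ht0.le ht2 hBy (z := (t : ℂ)) (by rw [Complex.norm_real, Real.norm_eq_abs, abs_of_pos ht0]) (k + 1)
        have hrw : (f y ↑t - ∑ j ∈ Finset.range k, c y j * (↑t) ^ j) / (↑t) ^ k - c y k
            = (f y ↑t - ∑ j ∈ Finset.range (k + 1), c y j * (↑t) ^ j) / (↑t) ^ k := by
          rw [Finset.sum_range_succ]
          field_simp
          ring
        rw [hrw, norm_div, norm_pow, Complex.norm_real, Real.norm_eq_abs, abs_of_pos ht0]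
        rw [div_le_iff₀ (by positivity)]
        have hq : t / 2⁻¹ = 2 * t := by field_simp
        have h2t : (3:ℝ)/4 ≤ 1 - t / 2⁻¹ := by rw [hq]; linarith
        calc ‖f y ↑t - ∑ j ∈ Finset.range (k + 1), c y j * (↑t) ^ j‖
            ≤ B * (t / 2⁻¹) ^ (k + 1) / (1 - t / 2⁻¹) := htail
          _ ≤ B * (2 * t) ^ (k + 1) / (3 / 4) := by
              rw [hq]
              have hnum : (0:ℝ) ≤ B * (2 * t) ^ (k + 1) := by positivity
              apply div_le_div_of_nonneg_left hnum (by norm_num)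
              rw [← hq]; exact h2t
          _ = B * 2 ^ (k + 1) * (4 / 3) * t * t ^ k := by
              rw [mul_pow, pow_succ]
              ring
          _ ≤ ε / 4 * t ^ k := by
              have h1 : B * 2 ^ (k + 1) * (4 / 3) * t ≤ D * t := by
                apply mul_le_mul_of_nonneg_right ?_ ht0.le
                calc B * 2 ^ (k + 1) * (4 / 3) ≤ (l + M + 1) * 2 ^ (k + 1) * 2 := by
                      have h2 : (0:ℝ) < 2 ^ (k + 1) := by positivity
                      nlinarith
                  _ = D := by rw [hD, pow_succ]; ring
              have h2 : (0:ℝ) ≤ t ^ k := by positivity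
              exact mul_le_mul_of_nonneg_right (le_trans h1 htD) h2
      -- convergence of quotients
      have hft : Tendsto (fun y => f y ↑t) (𝓝[S] x) (𝓝 (f x ↑t)) := by
        have h2 : Tendsto (fun y : ℝ => (y, t)) (𝓝[S] x)
            (𝓝[(Ioo (-1 : ℝ) 1) ×ˢ (Ioo (-1 : ℝ) 1)] (x, t)) := by
          rw [tendsto_nhdsWithin_iff]
          constructor
          · exact ((continuous_id.prodMk continuous_const).tendsto x).mono_left
              nhdsWithin_le_nhds
          · filter_upwards [self_mem_nhdsWithin] with y hy
            exact ⟨hy.1, htI⟩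
        exact Filter.Tendsto.comp (hcont (x, t) ⟨hxI, htI⟩) h2
      have hQt : Tendsto
          (fun y => (f y ↑t - ∑ j ∈ Finset.range k, c y j * (↑t) ^ j) / (↑t) ^ k) (𝓝[S] x)
          (𝓝 ((f x ↑t - ∑ j ∈ Finset.range k, c x j * (↑t) ^ j) / (↑t) ^ k)) := by
        apply Tendsto.div_const
        exact hft.sub (tendsto_finset_sum _ fun j hj =>
          ((IH j (Finset.mem_range.mp hj) x ⟨hxc, hxI⟩).mul_const _))
      filter_upwards [Metric.tendsto_nhds.mp hQt (ε / 4) (by linarith), self_mem_nhdsWithin]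
        with y hy1 hy2
      have e1 := key y l hl.le (by linarith) (hhol y hy2.1)
        (fun w hw => hSb y hy2 (by norm_num) (by norm_num) w hw)
      have e2 := key x M hM0 (by linarith) hgx hMb
      rw [dist_eq_norm]
      set Qy := (f y ↑t - ∑ j ∈ Finset.range k, c y j * (↑t) ^ j) / (↑t) ^ k with hQy
      set Qx := (f x ↑t - ∑ j ∈ Finset.range k, c x j * (↑t) ^ j) / (↑t) ^ k with hQx
      have hd : ‖Qy - Qx‖ < ε / 4 := by rw [← dist_eq_norm]; exact hy1
      calc ‖c y k - c x k‖ = ‖-(Qy - c y k) + (Qy - Qx) + (Qx - c x k)‖ := by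
            congr 1; ring
        _ ≤ ‖-(Qy - c y k) + (Qy - Qx)‖ + ‖Qx - c x k‖ := norm_add_le _ _
        _ ≤ ‖-(Qy - c y k)‖ + ‖Qy - Qx‖ + ‖Qx - c x k‖ := by
            have := norm_add_le (-(Qy - c y k)) (Qy - Qx)
            linarith
        _ < ε := by
            rw [norm_neg]
            linarith
  constructor
  · -- K_l is closed in I
    rintro x ⟨hxc, hxI⟩
    have hgx : DifferentiableOn ℂ (f x) (ball 0 1) := hhol x hxI
    refine ⟨hxI, fun z hz => ?_⟩
    have hz1 : ‖z‖ < 1 := mem_ball_zero_iff.mp hz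
    set r : ℝ := ‖z‖ with hr
    set ρ : ℝ := (1 + r) / 2 with hρ
    have hr0 : 0 ≤ r := norm_nonneg z
    have hρ0 : 0 < ρ := by positivity
    have hρ1 : ρ < 1 := by rw [hρ]; linarith
    have hrρ : r < ρ := by rw [hρ]; linarith
    set q : ℝ := r / ρ with hqdef
    have hq0 : 0 ≤ q := div_nonneg hr0 hρ0.le
    have hq1 : q < 1 := (div_lt_one hρ0).mpr hrρ
    have hne : (𝓝[S] x).NeBot := mem_closure_iff_nhdsWithin_neBot.mp hxc
    have hPx : ∀ N : ℕ, ‖∑ j ∈ Finset.range N, c x j * z ^ j‖ ≤ l + l * q ^ N / (1 - q) := by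
      intro N
      have htd : Tendsto (fun y => ‖∑ j ∈ Finset.range N, c y j * z ^ j‖) (𝓝[S] x)
          (𝓝 ‖∑ j ∈ Finset.range N, c x j * z ^ j‖) :=
        (tendsto_finset_sum _ fun j _ => ((hC j x ⟨hxc, hxI⟩).mul_const _)).norm
      refine le_of_tendsto htd ?_
      filter_upwards [self_mem_nhdsWithin] with y hy
      have h1 : ‖f y z‖ ≤ l := hy.2 z hz
      have h2 : ‖f y z - ∑ j ∈ Finset.range N, c y j * z ^ j‖ ≤ l * q ^ N / (1 - q) :=
        tail_bound (hhol y hy.1) hρ0 hρ1 hr0 hrρ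
          (fun w hw => hSb y hy hρ0 hρ1 w hw) le_rfl N
      calc ‖∑ j ∈ Finset.range N, c y j * z ^ j‖
          = ‖f y z - (f y z - ∑ j ∈ Finset.range N, c y j * z ^ j)‖ := by congr 1; ring
        _ ≤ ‖f y z‖ + ‖f y z - ∑ j ∈ Finset.range N, c y j * z ^ j‖ := norm_sub_le _ _
        _ ≤ l + l * q ^ N / (1 - q) := add_le_add h1 h2
    have hsum := hasSum_cf hgx hz1
    have hlim : Tendsto (fun N => ‖∑ j ∈ Finset.range N, c x j * z ^ j‖) atTop
        (𝓝 ‖f x z‖) := hsum.tendsto_sum_nat.norm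
    have hblim : Tendsto (fun N : ℕ => l + l * q ^ N / (1 - q)) atTop
        (𝓝 (l + l * 0 / (1 - q))) := by
      exact tendsto_const_nhds.add
        (((tendsto_pow_atTop_nhds_zero_of_lt_one hq0 hq1).const_mul l).div_const _)
    have := le_of_tendsto_of_tendsto' hlim hblim hPx
    simpa using this
  · -- joint continuity
    rintro ⟨x, z₀⟩ ⟨hxS, hz₀⟩
    have hz₀1 : ‖z₀‖ < 1 := mem_ball_zero_iff.mp hz₀
    set r : ℝ := (1 + ‖z₀‖) / 2 with hr
    set ρ : ℝ := (1 + r) / 2 with hρ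
    have hz₀r : ‖z₀‖ < r := by rw [hr]; linarith
    have hr0 : 0 ≤ r := by positivity
    have hr1 : r < 1 := by rw [hr]; linarith
    have hρ0 : 0 < ρ := by positivity
    have hρ1 : ρ < 1 := by rw [hρ]; linarith
    have hrρ : r < ρ := by rw [hρ]; linarith
    set q : ℝ := r / ρ with hqdef
    have hq0 : 0 ≤ q := div_nonneg hr0 hρ0.le
    have hq1 : q < 1 := (div_lt_one hρ0).mpr hrρ
    have hxcl : x ∈ closure S := subset_closure hxS
    refine Metric.tendsto_nhds.mpr ?_
    intro ε hε
    obtain ⟨N, hN⟩ : ∃ N : ℕ, 2 * (l * q ^ N / (1 - q)) < ε / 2 := by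
      have hq' : Tendsto (fun N : ℕ => 2 * (l * q ^ N / (1 - q))) atTop
          (𝓝 (2 * (l * 0 / (1 - q)))) :=
        (((tendsto_pow_atTop_nhds_zero_of_lt_one hq0 hq1).const_mul l).div_const _).const_mul 2
      simp only [mul_zero, zero_div, zero_mul, mul_zero] at hq'
      exact (hq'.eventually_lt_const (by positivity : (0:ℝ) < ε / 2)).exists
    have hPN : Tendsto (fun p : ℝ × ℂ => ∑ j ∈ Finset.range N, c p.1 j * p.2 ^ j)
        (𝓝[S ×ˢ ball (0 : ℂ) 1] (x, z₀)) (𝓝 (∑ j ∈ Finset.range N, c x j * z₀ ^ j)) := by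
      apply tendsto_finset_sum
      intro j _
      apply Tendsto.mul
      · have hfst : Tendsto (fun p : ℝ × ℂ => p.1) (𝓝[S ×ˢ ball (0 : ℂ) 1] (x, z₀))
            (𝓝[S] x) := by
          rw [tendsto_nhdsWithin_iff]
          constructor
          · exact (continuous_fst.tendsto _).mono_left nhdsWithin_le_nhds
          · filter_upwards [self_mem_nhdsWithin] with p hp using hp.1
        exact (hC j x ⟨hxcl, hxS.1⟩).comp hfst
      · exact ((continuous_snd.pow j).tendsto (x, z₀)).mono_left nhdsWithin_le_nhds
    have hrev : ∀ᶠ p : ℝ × ℂ in 𝓝[S ×ˢ ball (0 : ℂ) 1] (x, z₀), ‖p.2‖ < r := by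
      have : Tendsto (fun p : ℝ × ℂ => ‖p.2‖) (𝓝[S ×ˢ ball (0 : ℂ) 1] (x, z₀)) (𝓝 ‖z₀‖) :=
        (continuous_snd.norm.tendsto (x, z₀)).mono_left nhdsWithin_le_nhds
      exact this.eventually_lt_const hz₀r
    have htailx : ‖f x z₀ - ∑ j ∈ Finset.range N, c x j * z₀ ^ j‖ ≤ l * q ^ N / (1 - q) :=
      tail_bound (hhol x hxS.1) hρ0 hρ1 hr0 hrρ
        (fun w hw => hSb x hxS hρ0 hρ1 w hw) hz₀r.le N
    filter_upwards [Metric.tendsto_nhds.mp hPN (ε / 4) (by linarith), hrev,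
      self_mem_nhdsWithin] with p hp1 hp2 hp3
    have htaily : ‖f p.1 p.2 - ∑ j ∈ Finset.range N, c p.1 j * p.2 ^ j‖
        ≤ l * q ^ N / (1 - q) :=
      tail_bound (hhol p.1 hp3.1.1) hρ0 hρ1 hr0 hrρ
        (fun w hw => hSb p.1 hp3.1 hρ0 hρ1 w hw) hp2.le N
    have hd : ‖(∑ j ∈ Finset.range N, c p.1 j * p.2 ^ j)
        - ∑ j ∈ Finset.range N, c x j * z₀ ^ j‖ < ε / 4 := by
      rw [← dist_eq_norm]; exact hp1
    rw [dist_eq_norm]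
    calc ‖f p.1 p.2 - f x z₀‖
        = ‖(f p.1 p.2 - ∑ j ∈ Finset.range N, c p.1 j * p.2 ^ j)
            + ((∑ j ∈ Finset.range N, c p.1 j * p.2 ^ j)
              - ∑ j ∈ Finset.range N, c x j * z₀ ^ j)
            + -(f x z₀ - ∑ j ∈ Finset.range N, c x j * z₀ ^ j)‖ := by congr 1; ring
      _ ≤ ‖(f p.1 p.2 - ∑ j ∈ Finset.range N, c p.1 j * p.2 ^ j)
            + ((∑ j ∈ Finset.range N, c p.1 j * p.2 ^ j)
              - ∑ j ∈ Finset.range N, c x j * z₀ ^ j)‖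
          + ‖-(f x z₀ - ∑ j ∈ Finset.range N, c x j * z₀ ^ j)‖ := norm_add_le _ _
      _ ≤ ‖f p.1 p.2 - ∑ j ∈ Finset.range N, c p.1 j * p.2 ^ j‖
          + ‖(∑ j ∈ Finset.range N, c p.1 j * p.2 ^ j)
              - ∑ j ∈ Finset.range N, c x j * z₀ ^ j‖
          + ‖-(f x z₀ - ∑ j ∈ Finset.range N, c x j * z₀ ^ j)‖ := by
            have := norm_add_le (f p.1 p.2 - ∑ j ∈ Finset.range N, c p.1 j * p.2 ^ j)
              ((∑ j ∈ Finset.range N, c p.1 j * p.2 ^ j)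
                - ∑ j ∈ Finset.range N, c x j * z₀ ^ j)
            linarith
      _ < ε := by
          rw [norm_neg]
          linarith
end
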